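/- There is an isomorphism of abelian groups ℤ × ℤ/4 ≅ GW(ℤ/4) sending (1, 0) to [1] and (0, 1) to ⟨⟨3⟩⟩ = [1] − [3]. In particular, the element [1] − [3] has additive order 4 in GW(ℤ/4). -/

import Mathlib

set_option synthInstance.maxHeartbeats 1000000
set_option maxHeartbeats 1000000
set_option maxRecDepth 10000


noncomputable section

/-- The subgroup of squares of units of a commutative ring. -/
def squareUnits (R : Type) [CommRing R] : Subgroup Rˣ :=
  (powMonoidHom 2 : Rˣ →* Rˣ).range

/-- The group of square classes `Rˣ/(Rˣ)²`. -/
def SqCl (R : Type) [CommRing R] : Type := Rˣ ⧸ squareUnits R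

instance (R : Type) [CommRing R] : CommGroup (SqCl R) :=
  QuotientGroup.Quotient.commGroup (squareUnits R)

/-- The square class `[a]` of a unit `a`. -/
def cls {R : Type} [CommRing R] (a : Rˣ) : SqCl R := QuotientGroup.mk a

/-- The group ring `ℤ[Rˣ/(Rˣ)²]`. -/
abbrev GRing (R : Type) [CommRing R] := MonoidAlgebra ℤ (SqCl R)

/-- The generator `[a]` of the group ring, for a unit `a`. -/
def gen {R : Type} [CommRing R] (a : Rˣ) : GRing R :=
  MonoidAlgebra.of ℤ (SqCl R) (cls a)

/-- The set of relations defining the Grothendieck–Witt ring of a (connected semi-)local ring: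
`([a₁]+[a₂]+[a₃]+[a₄]) − ([b₁]+[b₂]+[b₃]+[b₄])` whenever there exists `P ∈ GL₄(R)` with
`P ⬝ diag(a₁,…,a₄) ⬝ Pᵀ = diag(b₁,…,b₄)`. -/
def gwRel (R : Type) [CommRing R] : Set (GRing R) :=
  {x | ∃ (a b : Fin 4 → Rˣ) (P : Matrix (Fin 4) (Fin 4) R),
    IsUnit P.det ∧
    P * Matrix.diagonal (fun i => (a i : R)) * P.transpose =
      Matrix.diagonal (fun i => (b i : R)) ∧
    x = (∑ i, gen (a i)) - (∑ i, gen (b i))}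

/-- The (symmetric) Grothendieck–Witt ring of `R`, presented à la Knebusch–Rosenberg–Ware. -/
abbrev GW (R : Type) [CommRing R] := GRing R ⧸ Ideal.span (gwRel R)

/-- The class `[a] ∈ GW(R)` of a unit `a`. -/
def gw {R : Type} [CommRing R] (a : Rˣ) : GW R :=
  Ideal.Quotient.mk (Ideal.span (gwRel R)) (gen a)

/-- The (symmetric) Witt ring of `R` : the quotient of `GW(R)` by the ideal generated by the
hyperbolic element `[1] + [-1]`. -/
abbrev Wr (R : Type) [CommRing R] := GW R ⧸ Ideal.span {gw (R := R) 1 + gw (-1)}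

/-- The class in the Witt ring of a unit `a`. -/
def wcl {R : Type} [CommRing R] (a : Rˣ) : Wr R :=
  Ideal.Quotient.mk (Ideal.span {gw (R := R) 1 + gw (-1)}) (gw a)

namespace GW4aux

open Matrix

def u3 : (ZMod 4)ˣ := ZMod.unitOfCoprime 3 (by decide)

lemma sq_one : ∀ u : (ZMod 4)ˣ, u ^ 2 = 1 := by decide
lemma units_cases : ∀ u : (ZMod 4)ˣ, u = 1 ∨ u = u3 := by decide
lemma u3_ne : u3 ≠ 1 := by decide

lemma cls_eq_iff {a b : (ZMod 4)ˣ} : cls a = cls b ↔ a = b := by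
  constructor
  · intro h
    obtain ⟨c, hc⟩ := (QuotientGroup.eq (s := squareUnits (ZMod 4))).mp h
    have hc' : c ^ 2 = a⁻¹ * b := hc
    rw [sq_one] at hc'
    have := hc'.symm
    rw [inv_mul_eq_one] at this
    exact this
  · rintro rfl; rfl

/-- value of a unit: 0 for 1, 3 for 3 -/
def ψ (u : (ZMod 4)ˣ) : ZMod 4 := if u = 1 then 0 else 3

def φ₀ (u : (ZMod 4)ˣ) : ℤ × ZMod 4 := (1, ψ u)

def φ (q : SqCl (ZMod 4)) : ℤ × ZMod 4 :=
  Quotient.liftOn q φ₀ (by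
    intro a b h
    have : a⁻¹ * b ∈ squareUnits (ZMod 4) := QuotientGroup.leftRel_apply.mp h
    obtain ⟨c, hc⟩ := this
    have hc' : c ^ 2 = a⁻¹ * b := hc
    rw [sq_one, eq_comm, inv_mul_eq_one] at hc'
    rw [hc'])

lemma φ_cls (u : (ZMod 4)ˣ) : φ (cls u) = φ₀ u := rfl

/-- the additive invariant -/
def Φ : GRing (ZMod 4) →+ ℤ × ZMod 4 :=
  (Finsupp.liftAddHom (fun g => zmultiplesHom _ (φ g))).comp
    MonoidAlgebra.coeffAddEquiv.toAddMonoidHom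

lemma Φ_single (g : SqCl (ZMod 4)) (n : ℤ) :
    Φ (MonoidAlgebra.single g n) = n • φ g := by
  exact Finsupp.liftAddHom_apply_single (fun g => zmultiplesHom _ (φ g)) g n

lemma gen_eq (u : (ZMod 4)ˣ) : gen u = MonoidAlgebra.single (cls u) (1 : ℤ) := rfl

lemma Φ_gen (u : (ZMod 4)ˣ) : Φ (gen u) = φ₀ u := by
  rw [gen_eq, Φ_single, one_smul, φ_cls]


/-! ### Counting invariants -/

def qf (v : Fin 4 → (ZMod 4)ˣ) (x : Fin 4 → ZMod 4) : ZMod 4 :=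
  ∑ i, (v i : ZMod 4) * x i * x i

def cnt (v : Fin 4 → (ZMod 4)ˣ) (c : ZMod 4) : ℕ :=
  (Finset.univ.filter fun x : Fin 4 → ZMod 4 => qf v x = c).card

def tbl : ℕ → ℕ × ℕ
  | 0 => (32, 64) | 1 => (64, 96) | 2 => (96, 64) | 3 => (64, 32) | _ => (32, 64)

def kn (v : Fin 4 → (ZMod 4)ˣ) : ℕ := (Finset.univ.filter fun i => v i ≠ 1).card

def kk (v : Fin 4 → (ZMod 4)ˣ) : ZMod 4 := ∑ i, ψ (v i)

set_option maxHeartbeats 2000000 in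
set_option maxRecDepth 10000 in
lemma cnt_tbl : ∀ v : Fin 4 → (ZMod 4)ˣ, (cnt v 0, cnt v 1) = tbl (kn v) := by decide

set_option maxHeartbeats 2000000 in
set_option maxRecDepth 10000 in
lemma kk_of_tbl : ∀ v w : Fin 4 → (ZMod 4)ˣ, tbl (kn v) = tbl (kn w) → kk v = kk w := by
  decide

lemma qf_dot (v : Fin 4 → (ZMod 4)ˣ) (x : Fin 4 → ZMod 4) :
    qf v x = x ⬝ᵥ (Matrix.diagonal (fun i => (v i : ZMod 4)) *ᵥ x) := by
  unfold qf
  rw [dotProduct]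
  refine Finset.sum_congr rfl fun i _ => ?_
  rw [mulVec_diagonal]
  ring

lemma cnt_congr {v w : Fin 4 → (ZMod 4)ˣ} {P : Matrix (Fin 4) (Fin 4) (ZMod 4)}
    (hP : IsUnit P.det)
    (h : P * Matrix.diagonal (fun i => (v i : ZMod 4)) * Pᵀ =
      Matrix.diagonal (fun i => (w i : ZMod 4))) (c : ZMod 4) :
    cnt v c = cnt w c := by
  have hdt : IsUnit Pᵀ.det := by rwa [det_transpose]
  have : Invertible Pᵀ := Pᵀ.invertibleOfIsUnitDet hdt
  have key : ∀ x, qf w x = qf v (Pᵀ *ᵥ x) := by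
    intro x
    rw [qf_dot, qf_dot, ← h, ← mulVec_mulVec, ← mulVec_mulVec, dotProduct_mulVec,
      ← mulVec_transpose]
  unfold cnt
  refine (Finset.card_bij' (fun y _ => Pᵀ *ᵥ y) (fun x _ => (⅟(Pᵀ)) *ᵥ x) ?_ ?_ ?_ ?_).symm
  · intro y hy
    simp only [Finset.mem_filter, Finset.mem_univ, true_and] at hy ⊢
    rw [← key]; exact hy
  · intro x hx
    simp only [Finset.mem_filter, Finset.mem_univ, true_and] at hx ⊢
    rw [key, mulVec_mulVec, mul_invOf_self, one_mulVec]; exact hx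
  · intro y _
    show (⅟(Pᵀ)) *ᵥ (Pᵀ *ᵥ y) = y
    rw [mulVec_mulVec, invOf_mul_self, one_mulVec]
  · intro x _
    show Pᵀ *ᵥ ((⅟(Pᵀ)) *ᵥ x) = x
    rw [mulVec_mulVec, mul_invOf_self, one_mulVec]

lemma sum_ψ_congr {a b : Fin 4 → (ZMod 4)ˣ} {P : Matrix (Fin 4) (Fin 4) (ZMod 4)}
    (hP : IsUnit P.det)
    (h : P * Matrix.diagonal (fun i => (a i : ZMod 4)) * Pᵀ =
      Matrix.diagonal (fun i => (b i : ZMod 4))) :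
    (∑ i, ψ (a i)) = ∑ i, ψ (b i) := by
  have h0 := cnt_congr hP h 0
  have h1 := cnt_congr hP h 1
  have ht : tbl (kn a) = tbl (kn b) := by
    rw [← cnt_tbl a, ← cnt_tbl b, h0, h1]
  exact kk_of_tbl a b ht

/-! ### The invariant kills the relation ideal -/

lemma Φ_sum_gen (v : Fin 4 → (ZMod 4)ˣ) :
    Φ (∑ i, gen (v i)) = ((4 : ℤ), ∑ i, ψ (v i)) := by
  rw [map_sum]
  have : ∀ i ∈ Finset.univ, Φ (gen (v i)) = ((1 : ℤ), ψ (v i)) := fun i _ => Φ_gen _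
  rw [Finset.sum_congr rfl this]
  refine Prod.ext ?_ ?_
  · rw [Prod.fst_sum]; simp
  · rw [Prod.snd_sum]

lemma gen_mul (u v : (ZMod 4)ˣ) : gen u * gen v = gen (u * v) := by
  unfold gen
  have h : cls (u * v) = cls u * cls v := rfl
  rw [h, _root_.map_mul]

lemma Φ_gen_mul_rel (u : (ZMod 4)ˣ) (s : GRing (ZMod 4)) (hs : s ∈ gwRel (ZMod 4)) :
    Φ (gen u * s) = 0 := by
  obtain ⟨a, b, P, hP, hc, rfl⟩ := hs
  rw [mul_sub, Finset.mul_sum, Finset.mul_sum]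
  simp_rw [gen_mul]
  rw [map_sub, Φ_sum_gen, Φ_sum_gen]
  have hval : ∀ (f : Fin 4 → (ZMod 4)ˣ),
      (fun i => ((u * f i : (ZMod 4)ˣ) : ZMod 4)) =
        fun i => (u : ZMod 4) * ((f i : ZMod 4)) := by
    intro f; funext i; exact Units.val_mul _ _
  have hdiag : ∀ (f : Fin 4 → (ZMod 4)ˣ),
      Matrix.diagonal (fun i => ((u * f i : (ZMod 4)ˣ) : ZMod 4)) =
        (u : ZMod 4) • Matrix.diagonal (fun i => ((f i : ZMod 4))) := by
    intro f
    rw [hval f, ← Matrix.diagonal_smul]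
    rfl
  have hc' : P * Matrix.diagonal (fun i => ((u * a i : (ZMod 4)ˣ) : ZMod 4)) * Pᵀ =
      Matrix.diagonal (fun i => ((u * b i : (ZMod 4)ˣ) : ZMod 4)) := by
    rw [hdiag a, hdiag b, mul_smul_comm, smul_mul_assoc, hc]
  rw [sum_ψ_congr hP hc', sub_self]

lemma Φ_span (x : GRing (ZMod 4)) (hx : x ∈ Ideal.span (gwRel (ZMod 4))) : Φ x = 0 := by
  set U : Set (GRing (ZMod 4)) :=
    {y | ∃ u : (ZMod 4)ˣ, ∃ s ∈ gwRel (ZMod 4), y = gen u * s} with hU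
  set N : Submodule ℤ (GRing (ZMod 4)) := Submodule.span ℤ U with hN
  -- multiplication by a single maps N to N
  have hsingle : ∀ (g : SqCl (ZMod 4)) (y : GRing (ZMod 4)), y ∈ N →
      MonoidAlgebra.of ℤ (SqCl (ZMod 4)) g * y ∈ N := by
    intro g y hy
    refine Submodule.span_induction ?_ ?_ ?_ ?_ hy
    · rintro z ⟨u, s, hs, rfl⟩
      obtain ⟨w, hw⟩ := Quotient.exists_rep g
      have hgw : MonoidAlgebra.of ℤ (SqCl (ZMod 4)) g = gen w := by rw [← hw]; rfl
      rw [hgw, ← mul_assoc, gen_mul]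
      exact Submodule.subset_span ⟨w * u, s, hs, rfl⟩
    · rw [mul_zero]; exact Submodule.zero_mem _
    · intro x' y' _ _ hx' hy'
      rw [mul_add]; exact Submodule.add_mem _ hx' hy'
    · intro c x' _ hx'
      rw [mul_smul_comm]; exact Submodule.smul_mem _ _ hx'
  have hmul : ∀ (r : GRing (ZMod 4)) (y : GRing (ZMod 4)), y ∈ N → r * y ∈ N := by
    intro r y hy
    induction r using MonoidAlgebra.induction with
    | zero => rw [zero_mul]; exact Submodule.zero_mem _
    | single_add g c f _ _ ih =>
      rw [add_mul]
      refine Submodule.add_mem _ ?_ ih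
      have : (MonoidAlgebra.single g c : GRing (ZMod 4)) =
          c • MonoidAlgebra.of ℤ (SqCl (ZMod 4)) g := by
        show MonoidAlgebra.single g c = c • MonoidAlgebra.single g (1 : ℤ)
        rw [MonoidAlgebra.smul_single, smul_eq_mul, mul_one]
      rw [this, smul_mul_assoc]
      exact Submodule.smul_mem _ _ (hsingle g y hy)
  -- span of relations is inside N
  have hle : x ∈ N := by
    refine Submodule.span_induction ?_ ?_ ?_ ?_ hx
    · intro s hs
      have h1 : (gen 1 : GRing (ZMod 4)) = 1 := rfl
      have : s = gen 1 * s := by rw [h1, one_mul]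
      rw [this]
      exact Submodule.subset_span ⟨1, s, hs, rfl⟩
    · exact Submodule.zero_mem _
    · intro x' y' _ _ hx' hy'; exact Submodule.add_mem _ hx' hy'
    · intro r x' _ hx'
      rw [smul_eq_mul]; exact hmul r x' hx'
  -- Φ vanishes on N
  refine Submodule.span_induction ?_ ?_ ?_ ?_ hle
  · rintro z ⟨u, s, hs, rfl⟩; exact Φ_gen_mul_rel u s hs
  · exact map_zero _
  · intro x' y' _ _ hx' hy'; rw [map_add, hx', hy', add_zero]
  · intro c x' _ hx'; rw [map_zsmul, hx', smul_zero]


/-! ### The fundamental relation `4⟨1⟩ = 4⟨3⟩` -/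

def P0 : Matrix (Fin 4) (Fin 4) (ZMod 4) := !![1,1,1,0;1,3,0,1;1,0,3,3;0,1,3,1]
def Q0 : Matrix (Fin 4) (Fin 4) (ZMod 4) := !![3,3,3,0;3,1,0,3;3,0,1,1;0,3,1,3]

lemma hPQ : P0 * Q0 = 1 ∧ Q0 * P0 = 1 := by decide

lemma hdet : IsUnit P0.det :=
  (Matrix.isUnit_iff_isUnit_det P0).mp ⟨⟨P0, Q0, hPQ.1, hPQ.2⟩, rfl⟩

lemma hdiag : P0 * Matrix.diagonal (fun _ : Fin 4 => ((1 : (ZMod 4)ˣ) : ZMod 4)) * P0ᵀ =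
    Matrix.diagonal (fun _ : Fin 4 => ((u3 : (ZMod 4)ˣ) : ZMod 4)) := by decide

lemma x0_mem :
    ((∑ _i : Fin 4, gen (1 : (ZMod 4)ˣ)) - ∑ _i : Fin 4, gen u3) ∈ gwRel (ZMod 4) :=
  ⟨fun _ => 1, fun _ => u3, P0, hdet, hdiag, rfl⟩

lemma h4 : (4 : ℤ) • (gw (1 : (ZMod 4)ˣ) - gw u3) = 0 := by
  have hm : Ideal.Quotient.mk (Ideal.span (gwRel (ZMod 4)))
      ((∑ _i : Fin 4, gen (1 : (ZMod 4)ˣ)) - ∑ _i : Fin 4, gen u3) = 0 :=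
    Ideal.Quotient.eq_zero_iff_mem.mpr (Ideal.subset_span x0_mem)
  rw [map_sub, map_sum, map_sum] at hm
  have e1 : Ideal.Quotient.mk (Ideal.span (gwRel (ZMod 4))) (gen (1 : (ZMod 4)ˣ)) = gw 1 := rfl
  have e2 : Ideal.Quotient.mk (Ideal.span (gwRel (ZMod 4))) (gen u3) = gw u3 := rfl
  simp only [e1, e2, Finset.sum_const, Finset.card_univ, Fintype.card_fin] at hm
  rw [show (4 : ℤ) = ((4 : ℕ) : ℤ) from rfl, natCast_zsmul, smul_sub]
  rw [sub_eq_zero] at hm ⊢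
  exact hm

/-! ### The homomorphisms -/

def Zpart : ZMod 4 →+ GW (ZMod 4) :=
  ZMod.lift 4 ⟨zmultiplesHom _ (gw (1 : (ZMod 4)ˣ) - gw u3), by
    rw [zmultiplesHom_apply]
    exact_mod_cast h4⟩

lemma Zpart_intCast (k : ℤ) :
    Zpart ((k : ℤ) : ZMod 4) = k • (gw (1 : (ZMod 4)ˣ) - gw u3) :=
  ZMod.lift_coe _ _ _

def F : ℤ × ZMod 4 →+ GW (ZMod 4) :=
  AddMonoidHom.coprod (zmultiplesHom _ (gw (1 : (ZMod 4)ˣ))) Zpart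

lemma F_apply (m : ℤ) (n : ZMod 4) : F (m, n) = m • gw (1 : (ZMod 4)ˣ) + Zpart n := rfl

def Gfun : GW (ZMod 4) → ℤ × ZMod 4 := fun q =>
  Quotient.liftOn q Φ (fun a b hab => by
    have hmem : a - b ∈ Ideal.span (gwRel (ZMod 4)) := Submodule.quotientRel_def _ |>.mp hab
    have h0 := Φ_span _ hmem
    rw [map_sub] at h0
    exact sub_eq_zero.mp h0)

lemma Gfun_mk (a : GRing (ZMod 4)) :
    Gfun (Ideal.Quotient.mk (Ideal.span (gwRel (ZMod 4))) a) = Φ a := rfl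

def G : GW (ZMod 4) →+ ℤ × ZMod 4 where
  toFun := Gfun
  map_zero' := by
    have : (0 : GW (ZMod 4)) = Ideal.Quotient.mk (Ideal.span (gwRel (ZMod 4))) 0 :=
      (map_zero _).symm
    rw [this, Gfun_mk, map_zero]
  map_add' := by
    intro x y
    obtain ⟨a, rfl⟩ := Ideal.Quotient.mk_surjective x
    obtain ⟨b, rfl⟩ := Ideal.Quotient.mk_surjective y
    show Gfun (Ideal.Quotient.mk (Ideal.span (gwRel (ZMod 4))) a +
        Ideal.Quotient.mk (Ideal.span (gwRel (ZMod 4))) b) =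
      Gfun (Ideal.Quotient.mk (Ideal.span (gwRel (ZMod 4))) a) +
        Gfun (Ideal.Quotient.mk (Ideal.span (gwRel (ZMod 4))) b)
    rw [← map_add, Gfun_mk, Gfun_mk, Gfun_mk, map_add]

lemma G_gw1 : G (gw (1 : (ZMod 4)ˣ)) = (1, 0) := by
  show Φ (gen (1 : (ZMod 4)ˣ)) = (1, 0)
  rw [Φ_gen]
  simp [φ₀, ψ]

lemma G_gwu3 : G (gw u3) = (1, 3) := by
  show Φ (gen u3) = (1, 3)
  rw [Φ_gen]
  simp [φ₀, ψ, u3_ne]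

lemma G_d : G (gw (1 : (ZMod 4)ˣ) - gw u3) = (0, 1) := by
  rw [map_sub, G_gw1, G_gwu3]
  decide

lemma G_Zpart (n : ZMod 4) : G (Zpart n) = (0, n) := by
  obtain ⟨k, rfl⟩ := ZMod.intCast_surjective n
  rw [Zpart_intCast, map_zsmul, G_d]
  refine Prod.ext ?_ ?_
  · simp
  · show k • (1 : ZMod 4) = ((k : ℤ) : ZMod 4)
    rw [zsmul_eq_mul, mul_one]

lemma GF : ∀ z : ℤ × ZMod 4, G (F z) = z := by
  rintro ⟨m, n⟩
  rw [F_apply, map_add, map_zsmul, G_gw1, G_Zpart]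
  refine Prod.ext ?_ ?_
  · show m • (1 : ℤ) + 0 = m
    rw [smul_eq_mul, mul_one, add_zero]
  · show m • (0 : ZMod 4) + n = n
    rw [smul_zero, zero_add]

lemma F_inj : Function.Injective F := Function.LeftInverse.injective GF

lemma F10 : F (1, 0) = gw (1 : (ZMod 4)ˣ) := by
  rw [F_apply, map_zero, add_zero, one_smul]

lemma F01 : F (0, 1) = gw (1 : (ZMod 4)ˣ) - gw u3 := by
  rw [F_apply, zero_smul, zero_add,
    show (1 : ZMod 4) = ((1 : ℤ) : ZMod 4) by norm_num, Zpart_intCast, one_smul]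

lemma F13 : F (1, 3) = gw u3 := by
  rw [F_apply, one_smul, show (3 : ZMod 4) = ((3 : ℤ) : ZMod 4) by norm_num, Zpart_intCast]
  rw [show gw (1 : (ZMod 4)ˣ) + (3 : ℤ) • (gw (1 : (ZMod 4)ˣ) - gw u3) =
    gw u3 + (4 : ℤ) • (gw (1 : (ZMod 4)ˣ) - gw u3) by abel, h4, add_zero]

lemma F_surj : Function.Surjective F := by
  intro x
  obtain ⟨r, rfl⟩ := Ideal.Quotient.mk_surjective x
  show Ideal.Quotient.mk (Ideal.span (gwRel (ZMod 4))) r ∈ F.range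
  induction r using MonoidAlgebra.induction with
  | zero => rw [map_zero]; exact zero_mem _
  | single_add g c f _ _ ih =>
    rw [map_add]
    refine add_mem ?_ ih
    obtain ⟨w, hw⟩ := Quotient.exists_rep g
    have hw' : cls w = g := hw
    have hsingle : (MonoidAlgebra.single g c : GRing (ZMod 4)) = c • gen w := by
      rw [gen_eq, hw']
      show MonoidAlgebra.single g c = c • MonoidAlgebra.single g (1 : ℤ)
      rw [MonoidAlgebra.smul_single, smul_eq_mul, mul_one]
    rw [hsingle, map_zsmul]
    refine zsmul_mem ?_ c
    show gw w ∈ F.range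
    rcases units_cases w with rfl | rfl
    · exact ⟨(1, 0), F10⟩
    · exact ⟨(1, 3), F13⟩

def e : ℤ × ZMod 4 ≃+ GW (ZMod 4) := AddEquiv.ofBijective F ⟨F_inj, F_surj⟩

lemma e_apply (z : ℤ × ZMod 4) : e z = F z := rfl

lemma order_d : addOrderOf (gw (R := ZMod 4) 1 - gw u3) = 4 := by
  rw [← F01, addOrderOf_injective F F_inj, Prod.addOrderOf_mk, addOrderOf_zero,
    ZMod.addOrderOf_one]
  decide

theorem gw_zmod_four' :
    (∃ e : ℤ × ZMod 4 ≃+ GW (ZMod 4),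
      e (1, 0) = gw 1 ∧
      e (0, 1) = gw 1 - gw u3) ∧
    addOrderOf (gw (R := ZMod 4) 1 - gw u3) = 4 := by
  refine ⟨⟨e, ?_, ?_⟩, order_d⟩
  · rw [e_apply, F10]
  · rw [e_apply, F01]

end GW4aux

/-- `GW(ℤ/4) ≅ ℤ × ℤ/4` as abelian groups, via `(1,0) ↦ [1]` and
`(0,1) ↦ ⟨⟨3⟩⟩ = [1] − [3]`; in particular `[1] − [3]` has additive order `4`. -/
theorem gw_zmod_four :
    (∃ e : ℤ × ZMod 4 ≃+ GW (ZMod 4),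
      e (1, 0) = gw 1 ∧
      e (0, 1) = gw 1 - gw (ZMod.unitOfCoprime 3 (by decide))) ∧
    addOrderOf (gw (R := ZMod 4) 1 - gw (ZMod.unitOfCoprime 3 (by decide))) = 4 := by
  exact GW4aux.gw_zmod_four'

end
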